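/- If v* > 0 satisfies the quintic optimality equation a₅v*⁵ + a₄v*⁴ − a₂v*² − a₁v* − a₀ = 0, with a₅ = (1+C_E)κ_iβρ²S²C_{D,0}/η, a₄ = J̄*_W(1−β)S_{fc}ρ²S²C_{D,0}/2, a₂ = C_IρS, a₁ = 4(1+C_E)κ_iβC_{D,2}W²/η, a₀ = 6J̄*_W(1−β)S_{fc}C_{D,2}W², all parameters positive and β ∈ (0,1), then v* > (4C_{D,2}W²/(C_{D,0}ρ²S²))^{1/4} whenever C_I > 0; i.e., the minimum-DOC airspeed strictly exceeds the minimum-drag airspeed. -/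
import Mathlib


/-- The minimum-DOC airspeed (positive root of the quintic (12)) strictly exceeds
the minimum-drag airspeed v_md = (4C_{D,2}W²/(C_{D,0}ρ²S²))^{1/4} when C_I > 0. -/
theorem optimal_exceeds_min_drag_airspeed
    (κi ρ S CD0 CD2 W η CI CE Sfc Jbar β vstar : ℝ)
    (hκi : 0 < κi) (hρ : 0 < ρ) (hS : 0 < S) (hCD0 : 0 < CD0) (hCD2 : 0 < CD2)
    (hW : 0 < W) (hη : 0 < η) (hSfc : 0 < Sfc) (hCE : -1 < CE ∧ CE ≤ 1)
    (hβ : 0 < β ∧ β < 1) (hJbar : 0 ≤ Jbar) (hCI : 0 < CI)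
    (a5 a4 a2 a1 a0 : ℝ)
    (ha5 : a5 = (1 + CE) * κi * β * ρ^2 * S^2 * CD0 / η)
    (ha4 : a4 = Jbar * (1 - β) * Sfc * ρ^2 * S^2 * CD0 / 2)
    (ha2 : a2 = CI * ρ * S)
    (ha1 : a1 = 4 * (1 + CE) * κi * β * CD2 * W^2 / η)
    (ha0 : a0 = 6 * Jbar * (1 - β) * Sfc * CD2 * W^2)
    (hvpos : 0 < vstar)
    (hroot : a5 * vstar^5 + a4 * vstar^4 - a2 * vstar^2 - a1 * vstar - a0 = 0) :
    (4 * CD2 * W^2 / (CD0 * ρ^2 * S^2)) ^ ((1:ℝ)/4) < vstar := by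
  by_contra hcon
  push_neg at hcon
  set X : ℝ := 4 * CD2 * W^2 / (CD0 * ρ^2 * S^2) with hXdef
  have hX : 0 < X := by positivity
  have h4 : vstar ^ 4 ≤ X := by
    calc vstar ^ 4 ≤ (X ^ ((1:ℝ)/4)) ^ 4 := by
          exact pow_le_pow_left₀ hvpos.le hcon 4
      _ = X := by
          rw [← Real.rpow_natCast (X ^ ((1:ℝ)/4)) 4, ← Real.rpow_mul hX.le]
          norm_num
  have hden : 0 < CD0 * ρ^2 * S^2 := by positivity
  have hv4 : CD0 * ρ^2 * S^2 * vstar ^ 4 ≤ 4 * CD2 * W^2 := by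
    have := (le_div_iff₀ hden).mp h4
    linarith [this]
  subst ha5 ha4 ha2 ha1 ha0
  obtain ⟨hβ1, hβ2⟩ := hβ
  have hCE' : 0 < 1 + CE := by linarith [hCE.1]
  have hβ' : 0 ≤ 1 - β := by linarith
  have key1 : (1 + CE) * κi * β * ρ^2 * S^2 * CD0 / η * vstar^5 ≤
      4 * (1 + CE) * κi * β * CD2 * W^2 / η * vstar := by
    rw [div_mul_eq_mul_div, div_mul_eq_mul_div, div_le_div_iff₀ hη hη]
    have h := mul_le_mul_of_nonneg_left hv4 (le_of_lt (by positivity :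
      (0:ℝ) < (1 + CE) * κi * β * vstar))
    nlinarith [h]
  have key2 : Jbar * (1 - β) * Sfc * ρ^2 * S^2 * CD0 / 2 * vstar^4 ≤
      6 * Jbar * (1 - β) * Sfc * CD2 * W^2 := by
    have h := mul_le_mul_of_nonneg_left hv4 (by positivity :
      (0:ℝ) ≤ Jbar * (1 - β) * Sfc)
    nlinarith [h, mul_nonneg (mul_nonneg (mul_nonneg (mul_nonneg hJbar hβ')
      hSfc.le) hCD2.le) (sq_nonneg W)]
  have hpos : 0 < CI * ρ * S * vstar ^ 2 := by positivity
  linarith [key1, key2, hpos]
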